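/- Suppose the quantity 2[α(p−1) − (p+1)]/(δ(p−1)²) is positive, set a = −2/(p−1), and let b_∞ > 0 be the positive real number with b_∞^{p−1} = 2[α(p−1) − (p+1)]/(δ(p−1)²). If the coefficients satisfy a(a−1)·a_k + a·b_k + c_k = 0 for every k ∈ {−1, 0, …, n}, then the function u_∞(x) = b_∞·x^a satisfies the perturbed Lane–Emden equation for every x ∈ (0, ∞). -/

import Mathlib

set_option autoImplicit false
set_option maxHeartbeats 1000000

open Real Set

/-- If the matching conditions `a(a-1) a_k + a b_k + c_k = 0` hold for every
`k ∈ {-1, ..., n}`, then `u_∞(x) = b_∞ x^a`, `a = -2/(p-1)`, solves the perturbed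
Lane–Emden equation on all of `(0, ∞)`. -/
theorem perturbedLaneEmden_singular_solution_sufficient
    (p : ℕ) (hp : 1 < p) (α δ : ℝ) (hα : 0 < α) (hδ : δ ≠ 0)
    (n : ℕ) (a b c : ℤ → ℝ)
    (hpos : 0 < 2 * (α * ((p : ℝ) - 1) - ((p : ℝ) + 1)) / (δ * ((p : ℝ) - 1) ^ 2))
    (binf : ℝ) (hbinf : 0 < binf)
    (hbinfp : binf ^ (p - 1)
      = 2 * (α * ((p : ℝ) - 1) - ((p : ℝ) + 1)) / (δ * ((p : ℝ) - 1) ^ 2))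
    (hmatch : ∀ k ∈ Finset.Icc (-1 : ℤ) (n : ℤ),
      (-2 / ((p : ℝ) - 1)) * (-2 / ((p : ℝ) - 1) - 1) * a k
        + (-2 / ((p : ℝ) - 1)) * b k + c k = 0)
    (u : ℝ → ℝ) (hu : u = fun x : ℝ => binf * x ^ (-2 / ((p : ℝ) - 1))) :
    ∀ x ∈ Ioi (0 : ℝ),
      (1 + ∑ k ∈ Finset.Icc (-1 : ℤ) (n : ℤ), a k * x ^ (k + 2)) * deriv (deriv u) x
        + (α / x + ∑ k ∈ Finset.Icc (-1 : ℤ) (n : ℤ), b k * x ^ (k + 1)) * deriv u x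
        + (∑ k ∈ Finset.Icc (-1 : ℤ) (n : ℤ), c k * x ^ k) * u x
        + δ * u x ^ p = 0 := by
  intro x hx
  rw [mem_Ioi] at hx
  set A : ℝ := -2 / ((p : ℝ) - 1) with hA
  have hp1 : (1:ℝ) < (p:ℝ) := by exact_mod_cast hp
  have hpne : (p:ℝ) - 1 ≠ 0 := by linarith
  have hxne : x ≠ 0 := ne_of_gt hx
  -- derivatives
  have hd1 : ∀ y ∈ Ioi (0:ℝ), HasDerivAt u (binf * (A * y ^ (A-1))) y := by
    intro y hy
    rw [hu]
    exact (Real.hasDerivAt_rpow_const (p := A) (Or.inl (ne_of_gt hy))).const_mul binf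
  have hev : deriv u =ᶠ[nhds x] fun y => binf * (A * y ^ (A-1)) := by
    filter_upwards [Ioi_mem_nhds hx] with y hy using (hd1 y hy).deriv
  have hu1 : deriv u x = binf * (A * x ^ (A-1)) := (hd1 x hx).deriv
  have hu2 : deriv (deriv u) x = binf * (A * ((A-1) * x ^ (A-2))) := by
    rw [hev.deriv_eq]
    simp_rw [← mul_assoc]
    rw [((Real.hasDerivAt_rpow_const (p := A-1) (Or.inl hxne)).const_mul (binf * A)).deriv]
    ring_nf
  -- power manipulations
  have e1 : x ^ (A-1) = x ^ (A-2) * x := by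
    rw [show A-1 = (A-2)+1 by ring, Real.rpow_add hx, Real.rpow_one]
  have e0 : x ^ A = x ^ (A-2) * x * x := by
    rw [show A = (A-2)+1+1 by ring, Real.rpow_add hx, Real.rpow_add hx, Real.rpow_one]
    ring
  have hpow : (x ^ A) ^ p = x ^ (A-2) := by
    rw [← Real.rpow_natCast (x ^ A) p, ← Real.rpow_mul hx.le]
    congr 1
    rw [hA]; field_simp; ring
  have hb : δ * binf ^ p
      = binf * (2 * (α * ((p:ℝ)-1) - ((p:ℝ)+1)) / (((p:ℝ)-1)^2)) := by
    have h1 : binf ^ p = binf ^ (p-1) * binf := by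
      rw [← pow_succ]; congr 1; omega
    rw [h1, hbinfp]
    field_simp
  -- the main (k-independent) part
  have hmain : binf * (A * ((A-1) * x ^ (A-2))) + (α / x) * (binf * (A * x ^ (A-1)))
      + δ * (binf * x ^ A) ^ p = 0 := by
    rw [mul_pow, hpow, e1]
    have hbr : A*(A-1) + α*A + 2*(α*((p:ℝ)-1) - ((p:ℝ)+1))/(((p:ℝ)-1)^2) = 0 := by
      rw [hA]; field_simp; ring
    have hxx : α / x * (binf * (A * (x ^ (A-2) * x))) = α * (binf * (A * x ^ (A-2))) := by
      field_simp
    rw [hxx]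
    linear_combination (binf * x ^ (A-2)) * hbr + (x ^ (A-2)) * hb
  -- the sum part vanishes termwise
  have hsum : ∀ k ∈ Finset.Icc (-1 : ℤ) (n : ℤ),
      a k * x ^ (k+2) * (binf * (A * ((A-1) * x ^ (A-2))))
        + b k * x ^ (k+1) * (binf * (A * x ^ (A-1)))
        + c k * x ^ k * (binf * x ^ A) = 0 := by
    intro k hk
    have hz2 : x ^ (k+2) = x ^ k * x * x := by
      rw [show k+2 = k+1+1 by ring, zpow_add_one₀ hxne, zpow_add_one₀ hxne]
    have hz1 : x ^ (k+1) = x ^ k * x := zpow_add_one₀ hxne k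
    rw [hz2, hz1, e1, e0]
    linear_combination (binf * x ^ (k:ℤ) * x ^ (A-2) * x * x) * hmatch k hk
  -- combine
  rw [hu1, hu2, hu]
  beta_reduce
  have hS : (∑ k ∈ Finset.Icc (-1 : ℤ) (n : ℤ), a k * x ^ (k+2)) * (binf * (A * ((A-1) * x ^ (A-2))))
      + (∑ k ∈ Finset.Icc (-1 : ℤ) (n : ℤ), b k * x ^ (k+1)) * (binf * (A * x ^ (A-1)))
      + (∑ k ∈ Finset.Icc (-1 : ℤ) (n : ℤ), c k * x ^ k) * (binf * x ^ A) = 0 := by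
    rw [Finset.sum_mul, Finset.sum_mul, Finset.sum_mul, ← Finset.sum_add_distrib,
      ← Finset.sum_add_distrib]
    exact Finset.sum_eq_zero hsum
  linear_combination hmain + hS
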